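/- For any nonnegative integers m, n, t with t ≤ mn, the sum over partitions λ contained in the m×n rectangle with |λ| = t of f^λ * f^{λᶜ} equals f^{(n^m)}, where λᶜ is the partition such that λᶜ + (n, n-1, ..., 1) is the set complement of λ + (m, m-1, ..., 1) inside {1, ..., m+n}. In particular, the sum is independent of t. -/

import Mathlib

open Finset

/-- Cells of the ordinary Young diagram with row lengths given by the list `L`
(row `i`, columns `0,…,L_i-1`). -/
def shapeCells (L : List ℕ) : Finset (ℕ × ℕ) :=
  (Finset.range L.length).biUnion fun i =>
    (Finset.range (L.getD i 0)).image fun j => (i, j)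

/-- Cells of the shifted Young diagram with row lengths `L` (row `i` indented `i` places). -/
def shiftedCells (L : List ℕ) : Finset (ℕ × ℕ) :=
  (Finset.range L.length).biUnion fun i =>
    (Finset.range (L.getD i 0)).image fun j => (i, i + j)

/-- `T` is a standard Young tableau filling of the cell set `S`: a bijection onto
`{1,…,|S|}`, zero outside `S`, increasing along rows and down columns. -/
def IsSYT (S : Finset (ℕ × ℕ)) (T : ℕ × ℕ → ℕ) : Prop :=
  Set.BijOn T ↑S (Set.Icc 1 S.card) ∧ (∀ c, c ∉ S → T c = 0) ∧
  (∀ c ∈ S, (c.1, c.2 + 1) ∈ S → T c < T (c.1, c.2 + 1)) ∧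
  (∀ c ∈ S, (c.1 + 1, c.2) ∈ S → T c < T (c.1 + 1, c.2))

/-- A standard Young tableau which moreover increases down the main diagonal. -/
def IsSYTD (S : Finset (ℕ × ℕ)) (T : ℕ × ℕ → ℕ) : Prop :=
  IsSYT S T ∧ ∀ c ∈ S, c.1 = c.2 → (c.1 + 1, c.2 + 1) ∈ S → T c < T (c.1 + 1, c.2 + 1)

/-- The number of standard Young tableaux of a given cell set. -/
noncomputable def numSYT (S : Finset (ℕ × ℕ)) : ℕ :=
  Nat.card {T : ℕ × ℕ → ℕ // IsSYT S T}

/-- The number of standard Young tableaux (with the diagonal condition) of a cell set. -/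
noncomputable def numSYTD (S : Finset (ℕ × ℕ)) : ℕ :=
  Nat.card {T : ℕ × ℕ → ℕ // IsSYTD S T}

/-- The staircase list `(m, m-1, …, 1)`. -/
def stair (m : ℕ) : List ℕ := (List.range m).map fun i => m - i

/-- Sort a finite set of parts into a strictly decreasing list. -/
def sortDesc (s : Finset ℕ) : List ℕ := (s.sort (· ≤ ·)).reverse

/-- Number of SYT of the shifted shape whose set of parts is `s`. -/
noncomputable def gF (s : Finset ℕ) : ℕ := numSYT (shiftedCells (sortDesc s))

/-- Number of SYT of the ordinary shape with row lengths `L`. -/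
noncomputable def fL (L : List ℕ) : ℕ := numSYT (shapeCells L)

noncomputable def hg (s : Finset ℕ) : ℚ := (gF s : ℚ) / ((s.sum id).factorial : ℚ)

noncomputable def hf (L : List ℕ) : ℚ := (fL L : ℚ) / ((L.sum).factorial : ℚ)

/-- Superfactorial `F_j = 0! 1! ⋯ (j-1)!`. -/
def sf (j : ℕ) : ℕ := ∏ i ∈ Finset.range j, i.factorial

/-- The partition `μ + (c^k)`, as a list of `k` parts. -/
def addc (MU : List ℕ) (k c : ℕ) : List ℕ := (List.range k).map fun i => MU.getD i 0 + c

/-- The partition with `m` parts whose associated strict partition `λ + (m,…,1)`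
has set of parts `s`. -/
def partOf (m : ℕ) (s : Finset ℕ) : List ℕ :=
  (List.range m).map fun i => (sortDesc s).getD i 0 - (m - i)

set_option linter.unusedVariables false
set_option linter.unusedSectionVars false
set_option maxHeartbeats 1000000

lemma mem_shapeCells {L : List ℕ} {c : ℕ × ℕ} :
    c ∈ shapeCells L ↔ c.1 < L.length ∧ c.2 < L.getD c.1 0 := by
  obtain ⟨i, j⟩ := c
  simp only [shapeCells, Finset.mem_biUnion, Finset.mem_range, Finset.mem_image, Prod.mk.injEq]
  constructor
  · rintro ⟨i', hi', j', hj', rfl, rfl⟩; exact ⟨hi', hj'⟩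
  · rintro ⟨hi, hj⟩; exact ⟨i, hi, j, hj, rfl, rfl⟩

lemma card_shapeCells_aux (L : List ℕ) :
    (shapeCells L).card = ∑ i ∈ Finset.range L.length, L.getD i 0 := by
  rw [shapeCells, Finset.card_biUnion]
  · exact Finset.sum_congr rfl fun i _ => by
      rw [Finset.card_image_of_injective _ (fun a b h => by simpa using h), Finset.card_range]
  · intro x hx y hy hxy
    simp only [Finset.disjoint_left, Finset.mem_image, Finset.mem_range]
    rintro c ⟨j, hj, rfl⟩ ⟨j', hj', h⟩
    rw [Prod.mk.injEq] at h
    exact hxy h.1.symm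

lemma sum_eq_sum_getD (L : List ℕ) : L.sum = ∑ i ∈ Finset.range L.length, L.getD i 0 := by
  induction L with
  | nil => simp
  | cons a l ih =>
    rw [List.sum_cons, List.length_cons, Finset.sum_range_succ' (fun i => (a :: l).getD i 0)]
    simp only [List.getD_cons_succ, List.getD_cons_zero]
    rw [← ih, Nat.add_comm]

lemma card_shapeCells (L : List ℕ) : (shapeCells L).card = L.sum := by
  rw [card_shapeCells_aux, sum_eq_sum_getD]

lemma eq_range_card {S : Finset ℕ} (h : ∀ j, j + 1 ∈ S → j ∈ S) : S = Finset.range S.card := by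
  have hdown : ∀ d j, j + d ∈ S → j ∈ S := by
    intro d
    induction d with
    | zero => intro j hj; exact hj
    | succ d ih => intro j hj; exact ih j (h _ (by rwa [← Nat.add_assoc] at hj ))
  have key : ∀ j, j ∈ S ↔ j < S.card := by
    intro j
    constructor
    · intro hj
      have : Finset.range (j + 1) ⊆ S := by
        intro k hk
        rw [Finset.mem_range] at hk
        exact hdown (j - k) k (by rwa [Nat.add_sub_cancel' (Nat.lt_succ_iff.1 hk)])
      simpa using Finset.card_le_card this
    · intro hj
      by_contra hjs
      have : S ⊆ Finset.range j := by
        intro k hk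
        rw [Finset.mem_range]
        by_contra hk2
        exact hjs (hdown (k - j) j (by rwa [Nat.add_sub_cancel' (Nat.le_of_not_lt hk2)]))
      have := Finset.card_le_card this
      simp only [Finset.card_range] at this
      omega
  ext j; rw [key, Finset.mem_range]

instance : IsAntisymm ℕ (· > ·) := ⟨fun a b h1 h2 => absurd h1 (lt_asymm h2)⟩

lemma sortDesc_sorted (s : Finset ℕ) : (sortDesc s).Pairwise (· > ·) := by
  rw [sortDesc, List.pairwise_reverse]
  exact (Finset.sortedLT_sort s).pairwise

lemma sortDesc_toFinset (s : Finset ℕ) : (sortDesc s).toFinset = s := by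
  rw [sortDesc, List.toFinset_reverse, Finset.sort_toFinset]

lemma sortDesc_length (s : Finset ℕ) : (sortDesc s).length = s.card := by
  rw [sortDesc, List.length_reverse, Finset.length_sort]

lemma sortDesc_eq {s : Finset ℕ} {l : List ℕ} (hl : l.Pairwise (· > ·)) (hls : l.toFinset = s) :
    sortDesc s = l := by
  refine List.Perm.eq_of_pairwise' (sortDesc_sorted s) hl ?_
  refine List.perm_of_nodup_nodup_toFinset_eq ?_ hl.nodup (by rw [sortDesc_toFinset, hls])
  exact (sortDesc_sorted s).nodup

lemma sortDesc_image {k : ℕ} {f : ℕ → ℕ} (hf : ∀ i j, i < j → j < k → f j < f i) :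
    sortDesc ((Finset.range k).image f) = (List.range k).map f := by
  apply sortDesc_eq
  · rw [List.pairwise_map]
    refine List.Pairwise.imp_of_mem ?_ (List.pairwise_lt_range (n := k))
    intro a b ha hb hab
    exact hf a b hab (List.mem_range.1 hb)
  · ext x
    simp [List.mem_map, List.mem_range, Finset.mem_image, Finset.mem_range]

lemma getD_map_range {k i : ℕ} (f : ℕ → ℕ) (hi : i < k) :
    ((List.range k).map f).getD i 0 = f i := by
  rw [List.getD_eq_getElem _ _ (by simpa using hi)]
  simp

lemma sortDesc_getD_strict {s : Finset ℕ} {i j : ℕ} (hij : i < j) (hj : j < s.card) :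
    (sortDesc s).getD j 0 < (sortDesc s).getD i 0 := by
  have hl := sortDesc_sorted s
  rw [List.pairwise_iff_getElem] at hl
  have h1 : j < (sortDesc s).length := by rwa [sortDesc_length]
  have h2 : i < (sortDesc s).length := by omega
  rw [List.getD_eq_getElem _ _ h1, List.getD_eq_getElem _ _ h2]
  exact hl i j h2 h1 hij

lemma mem_sortDesc {s : Finset ℕ} {x : ℕ} : x ∈ sortDesc s ↔ x ∈ s := by
  rw [← sortDesc_toFinset s, List.mem_toFinset, sortDesc_toFinset]

lemma getD_mem_sortDesc {s : Finset ℕ} {i : ℕ} (hi : i < s.card) :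
    (sortDesc s).getD i 0 ∈ s := by
  rw [← mem_sortDesc]
  rw [List.getD_eq_getElem _ _ (by rwa [sortDesc_length])]
  exact List.getElem_mem _

/-- Row lengths of the partition encoded by `s`. -/
def Arow (m : ℕ) (s : Finset ℕ) (i : ℕ) : ℕ := (sortDesc s).getD i 0 - (m - i)

/-- Row lengths of the complementary partition. -/
def Brow (m n : ℕ) (s : Finset ℕ) (p : ℕ) : ℕ :=
  m - ((Finset.range m).filter (fun i => n - p ≤ Arow m s i)).card

lemma getD_partOf {m i : ℕ} {s : Finset ℕ} (hi : i < m) :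
    (partOf m s).getD i 0 = Arow m s i := by
  rw [partOf, getD_map_range _ hi, Arow]

lemma length_partOf (m : ℕ) (s : Finset ℕ) : (partOf m s).length = m := by
  simp [partOf]

section Comp

variable {m n : ℕ} {s : Finset ℕ}
variable (hcard : s.card = m) (hsub : s ⊆ Finset.Icc 1 (m + n))

include hcard in
lemma sortDesc_getD_le_sub {i k : ℕ} (h : i + k < m) :
    (sortDesc s).getD (i + k) 0 + k ≤ (sortDesc s).getD i 0 := by
  induction k with
  | zero => simp
  | succ k ih =>
    have h1 : (sortDesc s).getD (i + k + 1) 0 < (sortDesc s).getD (i + k) 0 :=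
      sortDesc_getD_strict (by omega) (by omega)
    have h2 := ih (by omega)
    have h3 : i + (k + 1) = i + k + 1 := by omega
    rw [h3]
    omega

include hcard hsub in
lemma sortDesc_getD_pos {i : ℕ} (hi : i < m) : 1 ≤ (sortDesc s).getD i 0 := by
  have := hsub (getD_mem_sortDesc (s := s) (i := i) (by omega))
  rw [Finset.mem_Icc] at this
  exact this.1

include hcard hsub in
lemma sortDesc_getD_le {i : ℕ} (hi : i < m) : (sortDesc s).getD i 0 ≤ m + n - i := by
  have h0 : (0 : ℕ) + i < m := by omega
  have := sortDesc_getD_le_sub hcard h0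
  have h2 := hsub (getD_mem_sortDesc (s := s) (i := 0) (by omega))
  rw [Finset.mem_Icc] at h2
  simp only [Nat.zero_add] at this
  omega

include hcard hsub in
lemma Arow_recover {i : ℕ} (hi : i < m) :
    Arow m s i + (m - i) = (sortDesc s).getD i 0 := by
  have h1 : i + (m - 1 - i) < m := by omega
  have h2 := sortDesc_getD_le_sub hcard h1
  have h3 := sortDesc_getD_pos hcard hsub (show m - 1 < m by omega)
  have h4 : i + (m - 1 - i) = m - 1 := by omega
  rw [h4] at h2
  rw [Arow]
  omega

include hcard hsub in
lemma Arow_le {i : ℕ} (hi : i < m) : Arow m s i ≤ n := by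
  have := sortDesc_getD_le hcard hsub hi
  rw [Arow]; omega

include hcard hsub in
lemma Arow_anti {i j : ℕ} (hij : i ≤ j) (hj : j < m) : Arow m s j ≤ Arow m s i := by
  have h1 := Arow_recover hcard hsub (show i < m by omega)
  have h2 := Arow_recover hcard hsub hj
  have h3 : i + (j - i) < m := by omega
  have h4 := sortDesc_getD_le_sub hcard h3
  have h5 : i + (j - i) = j := by omega
  rw [h5] at h4
  omega

include hcard hsub in
lemma Arow_strip_strict {i j : ℕ} (hij : i < j) (hj : j < m) :
    Arow m s j + (m - j) < Arow m s i + (m - i) := by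
  rw [Arow_recover hcard hsub hj, Arow_recover hcard hsub (by omega)]
  exact sortDesc_getD_strict hij (by omega)

include hcard hsub in
lemma s_eq_image : s = (Finset.range m).image (fun i => Arow m s i + (m - i)) := by
  have h1 : s = (Finset.range m).image (fun i => (sortDesc s).getD i 0) := by
    ext x
    simp only [Finset.mem_image, Finset.mem_range]
    constructor
    · intro hx
      have hx' : x ∈ sortDesc s := mem_sortDesc.2 hx
      obtain ⟨i, hi⟩ := List.get_of_mem hx'
      refine ⟨i, by have h2 : (i : ℕ) < (sortDesc s).length := i.2
                    rw [← hcard, ← sortDesc_length]; exact h2, ?_⟩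
      rw [List.getD_eq_getElem _ _ i.2]
      simp [← hi]
    · rintro ⟨i, hi, rfl⟩
      exact getD_mem_sortDesc (by omega)
  conv_lhs => rw [h1]
  apply Finset.image_congr
  intro i hi
  rw [Finset.coe_range, Set.mem_Iio] at hi
  exact (Arow_recover hcard hsub hi).symm

lemma gauss_sum (m : ℕ) : ∑ i ∈ Finset.range m, (m - i) = (m + 1).choose 2 := by
  induction m with
  | zero => simp
  | succ m ih =>
    rw [Finset.sum_range_succ' (fun i => m + 1 - i)]
    simp only [Nat.succ_sub_succ]
    rw [ih, Nat.sub_zero]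
    have h1 : (m + 1 + 1).choose 2 = (m + 1).choose 1 + (m + 1).choose 2 :=
      Nat.choose_succ_succ (m + 1) 1
    rw [h1, Nat.choose_one_right]
    omega

include hcard hsub in
lemma s_sum_eq : s.sum id = (∑ i ∈ Finset.range m, Arow m s i) + (m + 1).choose 2 := by
  conv_lhs => rw [s_eq_image hcard hsub]
  rw [Finset.sum_image]
  · simp only [id]
    rw [Finset.sum_add_distrib, gauss_sum]
  · intro x hx y hy hxy
    rw [Finset.mem_coe, Finset.mem_range] at hx hy
    by_contra hne
    rcases Nat.lt_or_ge x y with h | h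
    · have := Arow_strip_strict hcard hsub h hy
      simp only [id] at hxy; omega
    · have hxy' : y < x := by omega
      have := Arow_strip_strict hcard hsub hxy' hx
      simp only [id] at hxy; omega

include hcard hsub in
lemma Arow_ge_iff {p i : ℕ} (hi : i < m) :
    (n - p ≤ Arow m s i ↔ i < ((Finset.range m).filter (fun i => n - p ≤ Arow m s i)).card) := by
  set S := (Finset.range m).filter (fun i => n - p ≤ Arow m s i) with hS
  have hclosed : ∀ j, j + 1 ∈ S → j ∈ S := by
    intro j hj
    rw [hS, Finset.mem_filter, Finset.mem_range] at hj ⊢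
    exact ⟨by omega, le_trans hj.2 (Arow_anti hcard hsub (by omega) hj.1)⟩
  have := eq_range_card hclosed
  constructor
  · intro h
    have : i ∈ S := by rw [hS, Finset.mem_filter, Finset.mem_range]; exact ⟨hi, h⟩
    rw [eq_range_card hclosed, Finset.mem_range] at this
    exact this
  · intro h
    have : i ∈ S := by rw [eq_range_card hclosed, Finset.mem_range]; exact h
    rw [hS, Finset.mem_filter] at this
    exact this.2

lemma cP_le_m (p : ℕ) : ((Finset.range m).filter (fun i => n - p ≤ Arow m s i)).card ≤ m := by
  calc ((Finset.range m).filter (fun i => n - p ≤ Arow m s i)).card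
      ≤ (Finset.range m).card := Finset.card_filter_le _ _
    _ = m := Finset.card_range m

end Comp
section Comp2

variable {m n : ℕ} {s : Finset ℕ}
variable (hcard : s.card = m) (hsub : s ⊆ Finset.Icc 1 (m + n))

/-- `cP p` : number of rows with `A i ≥ n - p`. -/
def cP (m n : ℕ) (s : Finset ℕ) (p : ℕ) : ℕ :=
  ((Finset.range m).filter (fun i => n - p ≤ Arow m s i)).card

lemma Brow_eq (p : ℕ) : Brow m n s p = m - cP m n s p := rfl

include hcard hsub in
lemma cP_mono {p q : ℕ} (hpq : p ≤ q) : cP m n s p ≤ cP m n s q := by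
  apply Finset.card_le_card
  intro i hi
  rw [Finset.mem_filter] at hi ⊢
  exact ⟨hi.1, by omega⟩

include hcard hsub in
lemma compl_image :
    Finset.Icc 1 (m + n) \ s =
      (Finset.range n).image (fun p => Brow m n s p + (n - p)) := by
  have hstrict : ∀ p q, p < q → q < n →
      Brow m n s q + (n - q) < Brow m n s p + (n - p) := by
    intro p q hpq hq
    have h1 := cP_mono hcard hsub (s := s) (le_of_lt hpq)
    have h2 := cP_le_m (m := m) (n := n) (s := s) p
    have h3 := cP_le_m (m := m) (n := n) (s := s) q
    rw [Brow_eq, Brow_eq]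
    omega
  have hsubset : (Finset.range n).image (fun p => Brow m n s p + (n - p)) ⊆
      Finset.Icc 1 (m + n) \ s := by
    intro x hx
    rw [Finset.mem_image] at hx
    obtain ⟨p, hp, rfl⟩ := hx
    rw [Finset.mem_range] at hp
    have hcp := cP_le_m (m := m) (n := n) (s := s) p
    rw [Finset.mem_sdiff, Finset.mem_Icc]
    refine ⟨⟨by rw [Brow_eq]; omega, by rw [Brow_eq]; omega⟩, ?_⟩
    intro hmem
    have hmem' : Brow m n s p + (n - p) ∈
        (Finset.range m).image (fun i => Arow m s i + (m - i)) := by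
      rw [← s_eq_image hcard hsub]; exact hmem
    rw [Finset.mem_image] at hmem'
    obtain ⟨i, hi, heq⟩ := hmem'
    rw [Finset.mem_range] at hi
    have hiff : n - p ≤ Arow m s i ↔ i < cP m n s p := Arow_ge_iff hcard hsub (p := p) hi
    rw [Brow_eq] at heq
    rcases Nat.lt_or_ge (Arow m s i) (n - p) with hlt | hge
    · have h5 : ¬ (i < cP m n s p) := fun h => by have := hiff.2 h; omega
      omega
    · have h5 : i < cP m n s p := hiff.1 hge
      omega
  have hcards : ((Finset.range n).image (fun p => Brow m n s p + (n - p))).card = n := by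
    rw [Finset.card_image_of_injOn, Finset.card_range]
    intro x hx y hy hxy
    rw [Finset.coe_range, Set.mem_Iio] at hx hy
    have hxy' : Brow m n s x + (n - x) = Brow m n s y + (n - y) := hxy
    by_contra hne
    rcases Nat.lt_or_ge x y with h | h
    · have := hstrict x y h hy; omega
    · have := hstrict y x (by omega) hx; omega
  symm
  apply Finset.eq_of_subset_of_card_le hsubset
  rw [hcards, Finset.card_sdiff_of_subset hsub, Nat.card_Icc, hcard]
  omega

include hcard hsub in
lemma sortDesc_compl :
    sortDesc (Finset.Icc 1 (m + n) \ s) =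
      (List.range n).map (fun p => Brow m n s p + (n - p)) := by
  rw [compl_image hcard hsub]
  apply sortDesc_image
  intro p q hpq hq
  have h1 := cP_mono hcard hsub (s := s) (le_of_lt hpq)
  have h2 := cP_le_m (m := m) (n := n) (s := s) p
  rw [Brow_eq, Brow_eq]
  omega

include hcard hsub in
lemma getD_partOf_compl {p : ℕ} (hp : p < n) :
    (partOf n (Finset.Icc 1 (m + n) \ s)).getD p 0 = Brow m n s p := by
  rw [getD_partOf hp, Arow, sortDesc_compl hcard hsub, getD_map_range _ hp]
  omega

include hcard hsub in
lemma reflect_mem {p q : ℕ} (hp : p < n) (hq : q < m) :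
    q < Brow m n s p ↔ Arow m s (m - 1 - q) ≤ n - 1 - p := by
  have hiff' : n - p ≤ Arow m s (m - 1 - q) ↔ m - 1 - q < cP m n s p :=
    Arow_ge_iff hcard hsub (p := p) (i := m - 1 - q) (by omega)
  have h2 := cP_le_m (m := m) (n := n) (s := s) p
  rw [Brow_eq]
  constructor
  · intro h
    by_contra hcon
    have hge : n - p ≤ Arow m s (m - 1 - q) := by omega
    have := hiff'.1 hge
    omega
  · intro h
    have h3 : ¬ (m - 1 - q < cP m n s p) := fun hh => by have := hiff'.2 hh; omega
    omega

include hcard hsub in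
lemma Brow_sum :
    ∑ p ∈ Finset.range n, Brow m n s p = m * n - ∑ i ∈ Finset.range m, Arow m s i := by
  have hswap : ∑ p ∈ Finset.range n, cP m n s p = ∑ i ∈ Finset.range m, Arow m s i := by
    have h1 : ∀ p, cP m n s p = ∑ i ∈ Finset.range m, if n - p ≤ Arow m s i then 1 else 0 := by
      intro p; rw [cP, Finset.card_filter]
    simp only [h1]
    rw [Finset.sum_comm]
    apply Finset.sum_congr rfl
    intro i hi
    rw [Finset.mem_range] at hi
    have hAi := Arow_le hcard hsub hi
    rw [← Finset.card_filter]
    have : (Finset.range n).filter (fun p => n - p ≤ Arow m s i) =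
        Finset.Ico (n - Arow m s i) n := by
      ext p
      rw [Finset.mem_filter, Finset.mem_range, Finset.mem_Ico]
      omega
    rw [this, Nat.card_Ico]
    omega
  have h2 : ∀ p ∈ Finset.range n, Brow m n s p = m - cP m n s p := fun p _ => rfl
  rw [Finset.sum_congr rfl h2]
  have h3 : ∀ p ∈ Finset.range n, cP m n s p ≤ m := fun p _ => cP_le_m p
  calc ∑ p ∈ Finset.range n, (m - cP m n s p)
      = ∑ p ∈ Finset.range n, m - ∑ p ∈ Finset.range n, cP m n s p := by
        rw [eq_comm, Nat.sub_eq_iff_eq_add, ← Finset.sum_add_distrib]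
        · exact Finset.sum_congr rfl fun p hp => by have := h3 p hp; omega
        · exact Finset.sum_le_sum h3
    _ = m * n - ∑ i ∈ Finset.range m, Arow m s i := by
        rw [Finset.sum_const, Finset.card_range, smul_eq_mul, hswap, Nat.mul_comm n m]
end Comp2
/-! ### SYT infrastructure -/

section SYTBasic

variable {S : Finset (ℕ × ℕ)} {T : ℕ × ℕ → ℕ} {c c' : ℕ × ℕ} {t : ℕ}

lemma SYT_val (hT : IsSYT S T) (hc : c ∈ S) : 1 ≤ T c ∧ T c ≤ S.card := by
  have := hT.1.mapsTo hc
  rwa [Set.mem_Icc] at this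

lemma SYT_inj (hT : IsSYT S T) (hc : c ∈ S) (hc' : c' ∈ S) (h : T c = T c') : c = c' :=
  hT.1.injOn hc hc' h

lemma SYT_surj (hT : IsSYT S T) {v : ℕ} (h1 : 1 ≤ v) (h2 : v ≤ S.card) :
    ∃ c ∈ S, T c = v := by
  have := hT.1.surjOn (Set.mem_Icc.2 ⟨h1, h2⟩)
  obtain ⟨c, hc, hceq⟩ := this
  exact ⟨c, hc, hceq⟩

end SYTBasic

/-- SYTs of a fixed cell set form a finite type. -/
instance SYT_finite (S : Finset (ℕ × ℕ)) : Finite {T : ℕ × ℕ → ℕ // IsSYT S T} := by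
  have : Function.Injective (fun (T : {T : ℕ × ℕ → ℕ // IsSYT S T}) =>
      (fun c : {c // c ∈ S} => (⟨T.1 c.1, by
        have := (SYT_val T.2 c.2).2; omega⟩ : Fin (S.card + 1)))) := by
    intro T T' h
    apply Subtype.ext
    funext c
    by_cases hc : c ∈ S
    · have := congrFun h ⟨c, hc⟩
      simpa [Fin.ext_iff] using this
    · rw [T.2.2.1 c hc, T'.2.2.1 c hc]
  exact Finite.of_injective _ this

instance SYTD_finite (S : Finset (ℕ × ℕ)) : Finite {T : ℕ × ℕ → ℕ // IsSYTD S T} := by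
  have : Function.Injective (fun (T : {T : ℕ × ℕ → ℕ // IsSYTD S T}) =>
      (⟨T.1, T.2.1⟩ : {T : ℕ × ℕ → ℕ // IsSYT S T})) := by
    intro T T' h
    have h2 : T.1 = T'.1 :=
      congrArg (fun x : {T : ℕ × ℕ → ℕ // IsSYT S T} => x.val) h
    exact Subtype.ext h2
  exact Finite.of_injective _ this

/-- The number of cells with value at most `t` is `t`. -/
lemma SYT_card_filter (hT : IsSYT S T) (ht : t ≤ S.card) :
    (S.filter (fun c => T c ≤ t)).card = t := by
  have : (S.filter (fun c => T c ≤ t)).card = (Finset.Icc 1 t).card := by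
    apply Finset.card_bij (fun c _ => T c)
    · intro c hc
      rw [Finset.mem_filter] at hc
      have := SYT_val hT hc.1
      rw [Finset.mem_Icc]
      exact ⟨this.1, hc.2⟩
    · intro c hc c' hc' h
      rw [Finset.mem_filter] at hc hc'
      exact SYT_inj hT hc.1 hc'.1 h
    · intro v hv
      rw [Finset.mem_Icc] at hv
      obtain ⟨c, hc, rfl⟩ := SYT_surj hT hv.1 (le_trans hv.2 ht)
      exact ⟨c, Finset.mem_filter.2 ⟨hc, hv.2⟩, rfl⟩
  rw [this, Nat.card_Icc]
  omega

lemma card_filter_shape (L : List ℕ) (P : ℕ × ℕ → Prop) [DecidablePred P] :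
    ((shapeCells L).filter P).card
      = ∑ i ∈ Finset.range L.length, ((Finset.range (L.getD i 0)).filter (fun j => P (i, j))).card := by
  rw [shapeCells, Finset.filter_biUnion, Finset.card_biUnion]
  · apply Finset.sum_congr rfl
    intro i _
    rw [Finset.filter_image, Finset.card_image_of_injective _ (fun a b h => by simpa using h)]
  · intro x hx y hy hxy
    simp only [Finset.disjoint_left, Finset.filter_image, Finset.mem_image, Finset.mem_filter]
    rintro c ⟨j, hj, rfl⟩ ⟨j', hj', h⟩
    rw [Prod.mk.injEq] at h
    exact hxy h.1.symm

/-! ### The rectangle -/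

lemma getD_replicate {m n i : ℕ} (h : i < m) : (List.replicate m n).getD i 0 = n := by
  rw [List.getD_eq_getElem _ _ (by simpa using h)]; simp

lemma mem_rect {m n : ℕ} {c : ℕ × ℕ} :
    c ∈ shapeCells (List.replicate m n) ↔ c.1 < m ∧ c.2 < n := by
  rw [mem_shapeCells, List.length_replicate]
  constructor
  · rintro ⟨h1, h2⟩; rw [getD_replicate h1] at h2; exact ⟨h1, h2⟩
  · rintro ⟨h1, h2⟩; rw [getD_replicate h1]; exact ⟨h1, h2⟩

lemma mem_rect_pair {m n i j : ℕ} :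
    (i, j) ∈ shapeCells (List.replicate m n) ↔ i < m ∧ j < n := mem_rect

lemma mem_rect' {m n i j : ℕ} (h1 : i < m) (h2 : j < n) :
    (i, j) ∈ shapeCells (List.replicate m n) :=
  mem_rect.2 ⟨h1, h2⟩

lemma card_rect (m n : ℕ) : (shapeCells (List.replicate m n)).card = m * n := by
  rw [card_shapeCells, List.sum_replicate, smul_eq_mul]

/-! ### Row counts of a rectangular SYT -/

/-- The number of entries at most `t` in row `i`. -/
def aT (n t : ℕ) (T : ℕ × ℕ → ℕ) (i : ℕ) : ℕ :=
  ((Finset.range n).filter (fun j => T (i, j) ≤ t)).card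

lemma aT_le (n t : ℕ) (T : ℕ × ℕ → ℕ) (i : ℕ) : aT n t T i ≤ n := by
  calc aT n t T i ≤ (Finset.range n).card := Finset.card_filter_le _ _
    _ = n := Finset.card_range n

section RectSYT

variable {m n t : ℕ} {T : ℕ × ℕ → ℕ} (hT : IsSYT (shapeCells (List.replicate m n)) T)

include hT in
lemma aT_iff {i j : ℕ} (hi : i < m) (hj : j < n) :
    T (i, j) ≤ t ↔ j < aT n t T i := by
  set S := (Finset.range n).filter (fun j => T (i, j) ≤ t) with hS
  have hclosed : ∀ j, j + 1 ∈ S → j ∈ S := by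
    intro j hj'
    rw [hS, Finset.mem_filter, Finset.mem_range] at hj' ⊢
    have hlt : T (i, j) < T (i, j + 1) :=
      hT.2.2.1 (i, j) (mem_rect.2 ⟨hi, by omega⟩) (mem_rect.2 ⟨hi, by omega⟩)
    exact ⟨by omega, by omega⟩
  have hrange := eq_range_card hclosed
  constructor
  · intro h
    have : j ∈ S := by rw [hS, Finset.mem_filter, Finset.mem_range]; exact ⟨hj, h⟩
    rw [hrange, Finset.mem_range] at this
    exact this
  · intro h
    have : j ∈ S := by rw [hrange, Finset.mem_range]; exact h
    rw [hS, Finset.mem_filter] at this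
    exact this.2

include hT in
lemma T_col_mono {i i' j : ℕ} (hii' : i ≤ i') (hi' : i' < m) (hj : j < n) :
    T (i, j) ≤ T (i', j) := by
  have key : ∀ k, i + k < m → T (i, j) ≤ T (i + k, j) := by
    intro k
    induction k with
    | zero => intro _; exact le_refl _
    | succ k ih =>
      intro hk
      have h1 := ih (by omega)
      have h2 : T (i + k, j) < T (i + k + 1, j) :=
        hT.2.2.2 (i + k, j) (mem_rect.2 ⟨by omega, hj⟩) (mem_rect.2 ⟨by omega, hj⟩)
      have h4 : i + (k + 1) = i + k + 1 := by omega
      rw [h4]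
      omega
  have := key (i' - i) (by omega)
  have h3 : i + (i' - i) = i' := by omega
  rwa [h3] at this

include hT in
lemma aT_anti {i i' : ℕ} (hii' : i ≤ i') (hi' : i' < m) : aT n t T i' ≤ aT n t T i := by
  apply Finset.card_le_card
  intro j hj
  rw [Finset.mem_filter, Finset.mem_range] at hj ⊢
  exact ⟨hj.1, le_trans (T_col_mono hT hii' hi' hj.1) hj.2⟩

include hT in
lemma aT_sum (ht : t ≤ m * n) : ∑ i ∈ Finset.range m, aT n t T i = t := by
  have h1 := SYT_card_filter hT (t := t) (by rwa [card_rect])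
  rw [card_filter_shape, List.length_replicate] at h1
  have h2 : ∀ i ∈ Finset.range m,
      ((Finset.range ((List.replicate m n).getD i 0)).filter (fun j => T (i, j) ≤ t)).card
        = aT n t T i := by
    intro i hi
    rw [Finset.mem_range] at hi
    rw [getD_replicate hi, aT]
  rw [Finset.sum_congr rfl h2] at h1
  exact h1

end RectSYT
/-! ### Splitting and gluing -/

/-- The shape of entries `≤ t` of a rectangular tableau, encoded as a set of parts. -/
def phiT (m n t : ℕ) (T : ℕ × ℕ → ℕ) : Finset ℕ :=
  (Finset.range m).image (fun i => aT n t T i + (m - i))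

def splitA (t : ℕ) (T : ℕ × ℕ → ℕ) : ℕ × ℕ → ℕ := fun c => if T c ≤ t then T c else 0

def splitB (m n t : ℕ) (T : ℕ × ℕ → ℕ) : ℕ × ℕ → ℕ := fun c =>
  if c.1 < n ∧ c.2 < m ∧ t < T (m - 1 - c.2, n - 1 - c.1) then
    m * n + 1 - T (m - 1 - c.2, n - 1 - c.1)
  else 0

def glueT (m n t : ℕ) (s : Finset ℕ) (T₁ T₂ : ℕ × ℕ → ℕ) : ℕ × ℕ → ℕ := fun c =>
  if c.1 < m ∧ c.2 < n then
    (if c.2 < Arow m s c.1 then T₁ c else m * n + 1 - T₂ (n - 1 - c.2, m - 1 - c.1))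
  else 0

section Main

variable {m n t : ℕ} {s : Finset ℕ}
variable (hcard : s.card = m) (hsub : s ⊆ Finset.Icc 1 (m + n))
variable (hsum : s.sum id = t + (m + 1).choose 2)

lemma mem_Lam {c : ℕ × ℕ} :
    c ∈ shapeCells (partOf m s) ↔ c.1 < m ∧ c.2 < Arow m s c.1 := by
  rw [mem_shapeCells, length_partOf]
  constructor
  · rintro ⟨h1, h2⟩; rw [getD_partOf h1] at h2; exact ⟨h1, h2⟩
  · rintro ⟨h1, h2⟩; rw [getD_partOf h1]; exact ⟨h1, h2⟩

lemma mem_Lam_pair {i j : ℕ} :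
    (i, j) ∈ shapeCells (partOf m s) ↔ i < m ∧ j < Arow m s i := mem_Lam

include hcard hsub in
lemma mem_Mu {c : ℕ × ℕ} :
    c ∈ shapeCells (partOf n (Finset.Icc 1 (m + n) \ s)) ↔ c.1 < n ∧ c.2 < Brow m n s c.1 := by
  rw [mem_shapeCells, length_partOf]
  constructor
  · rintro ⟨h1, h2⟩; rw [getD_partOf_compl hcard hsub h1] at h2; exact ⟨h1, h2⟩
  · rintro ⟨h1, h2⟩; rw [getD_partOf_compl hcard hsub h1]; exact ⟨h1, h2⟩

include hcard hsub in
lemma mem_Mu_pair {p q : ℕ} :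
    (p, q) ∈ shapeCells (partOf n (Finset.Icc 1 (m + n) \ s)) ↔ p < n ∧ q < Brow m n s p :=
  mem_Mu hcard hsub

include hcard hsub hsum in
lemma Asum : ∑ i ∈ Finset.range m, Arow m s i = t := by
  have := s_sum_eq hcard hsub
  omega

include hcard hsub hsum in
lemma card_Lam : (shapeCells (partOf m s)).card = t := by
  rw [card_shapeCells_aux, length_partOf]
  rw [← Asum hcard hsub hsum]
  apply Finset.sum_congr rfl
  intro i hi
  rw [Finset.mem_range] at hi
  rw [getD_partOf hi]

include hcard hsub hsum in
lemma card_Mu : (shapeCells (partOf n (Finset.Icc 1 (m + n) \ s))).card = m * n - t := by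
  rw [card_shapeCells_aux, length_partOf]
  have h2 : ∀ p ∈ Finset.range n,
      (partOf n (Finset.Icc 1 (m + n) \ s)).getD p 0 = Brow m n s p := by
    intro p hp
    rw [Finset.mem_range] at hp
    exact getD_partOf_compl hcard hsub hp
  rw [Finset.sum_congr rfl h2, Brow_sum hcard hsub, Asum hcard hsub hsum]

include hcard hsub in
lemma reflect_mem_Mu {i j : ℕ} (hi : i < m) (hj : j < n) :
    (n - 1 - j, m - 1 - i) ∈ shapeCells (partOf n (Finset.Icc 1 (m + n) \ s))
      ↔ Arow m s i ≤ j := by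
  rw [mem_Mu hcard hsub]
  have hrm := reflect_mem hcard hsub (p := n - 1 - j) (q := m - 1 - i)
    (by omega) (by omega)
  have e1 : m - 1 - (m - 1 - i) = i := by omega
  have e2 : n - 1 - (n - 1 - j) = j := by omega
  rw [e1, e2] at hrm
  constructor
  · rintro ⟨h1, h2⟩
    exact hrm.1 h2
  · intro h
    exact ⟨by omega, hrm.2 h⟩

end Main
section Split

variable {m n t : ℕ} {s : Finset ℕ} {T : ℕ × ℕ → ℕ}
variable (hcard : s.card = m) (hsub : s ⊆ Finset.Icc 1 (m + n))
variable (hsum : s.sum id = t + (m + 1).choose 2) (ht : t ≤ m * n)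
variable (hT : IsSYT (shapeCells (List.replicate m n)) T)
variable (hA : ∀ i < m, aT n t T i = Arow m s i)

include hcard hsub hT hA in
lemma mem_Lam_T {c : ℕ × ℕ} :
    c ∈ shapeCells (partOf m s) ↔ c.1 < m ∧ c.2 < n ∧ T c ≤ t := by
  obtain ⟨i, j⟩ := c
  rw [mem_Lam]
  simp only
  constructor
  · rintro ⟨hi, hj⟩
    rw [← hA i hi] at hj
    have hjn : j < n := lt_of_lt_of_le hj (aT_le n t T i)
    exact ⟨hi, hjn, (aT_iff hT hi hjn).2 hj⟩
  · rintro ⟨hi, hjn, hTt⟩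
    refine ⟨hi, ?_⟩
    rw [← hA i hi]
    exact (aT_iff hT hi hjn).1 hTt

include hcard hsub hT hA in
lemma mem_Mu_T {c : ℕ × ℕ} :
    c ∈ shapeCells (partOf n (Finset.Icc 1 (m + n) \ s))
      ↔ c.1 < n ∧ c.2 < m ∧ t < T (m - 1 - c.2, n - 1 - c.1) := by
  obtain ⟨p, q⟩ := c
  simp only
  constructor
  · intro hmem
    have h1 := (mem_Mu hcard hsub).1 hmem
    simp only at h1
    obtain ⟨hp, hq⟩ := h1
    have hqm : q < m := by
      have := cP_le_m (m := m) (n := n) (s := s) p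
      rw [Brow_eq] at hq
      omega
    have hArow : Arow m s (m - 1 - q) ≤ n - 1 - p :=
      (reflect_mem hcard hsub hp hqm).1 hq
    rw [← hA (m - 1 - q) (by omega)] at hArow
    refine ⟨hp, hqm, ?_⟩
    by_contra hcon
    push_neg at hcon
    have h9 : n - 1 - p < aT n t T (m - 1 - q) :=
      (aT_iff hT (show m - 1 - q < m by omega) (show n - 1 - p < n by omega)).1 hcon
    omega
  · rintro ⟨hp, hq, hTt⟩
    rw [mem_Mu hcard hsub]
    refine ⟨hp, ?_⟩
    rw [reflect_mem hcard hsub hp hq, ← hA (m - 1 - q) (by omega)]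
    by_contra hcon
    push_neg at hcon
    have h9 : T (m - 1 - q, n - 1 - p) ≤ t :=
      (aT_iff hT (show m - 1 - q < m by omega) (show n - 1 - p < n by omega)).2 hcon
    omega

include hcard hsub hsum ht hT hA in
lemma isSYT_splitA : IsSYT (shapeCells (partOf m s)) (splitA t T) := by
  have hmem : ∀ c : ℕ × ℕ, c ∈ shapeCells (partOf m s) ↔ c.1 < m ∧ c.2 < n ∧ T c ≤ t :=
    fun c => mem_Lam_T hcard hsub hT hA
  have hval : ∀ c ∈ shapeCells (partOf m s), splitA t T c = T c := by
    intro c hc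
    rw [splitA, if_pos ((hmem c).1 hc).2.2]
  have hrect : ∀ c ∈ shapeCells (partOf m s), c ∈ shapeCells (List.replicate m n) := by
    intro c hc
    rw [mem_rect]
    have := (hmem c).1 hc
    exact ⟨this.1, this.2.1⟩
  refine ⟨⟨?_, ?_, ?_⟩, ?_, ?_, ?_⟩
  · intro c hc
    rw [Finset.mem_coe] at hc
    rw [hval c hc, Set.mem_Icc, card_Lam hcard hsub hsum]
    exact ⟨(SYT_val hT (hrect c hc)).1, ((hmem c).1 hc).2.2⟩
  · intro c hc c' hc' h
    rw [Finset.mem_coe] at hc hc'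
    rw [hval c hc, hval c' hc'] at h
    exact SYT_inj hT (hrect c hc) (hrect c' hc') h
  · intro v hv
    rw [Set.mem_Icc, card_Lam hcard hsub hsum] at hv
    obtain ⟨c, hc, hceq⟩ := SYT_surj hT hv.1 (by rw [card_rect]; omega)
    have hcL : c ∈ shapeCells (partOf m s) := by
      rw [mem_rect] at hc
      exact (hmem c).2 ⟨hc.1, hc.2, by omega⟩
    exact ⟨c, Finset.mem_coe.2 hcL, by rw [hval c hcL]; exact hceq⟩
  · intro c hc
    rw [splitA]
    by_cases hcr : c ∈ shapeCells (List.replicate m n)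
    · have hgt : ¬ T c ≤ t := by
        intro hle
        rw [mem_rect] at hcr
        exact hc ((hmem c).2 ⟨hcr.1, hcr.2, hle⟩)
      rw [if_neg hgt]
    · rw [hT.2.1 c hcr]
      simp
  · intro c hc hc2
    rw [hval c hc, hval _ hc2]
    exact hT.2.2.1 c (hrect c hc) (hrect _ hc2)
  · intro c hc hc2
    rw [hval c hc, hval _ hc2]
    exact hT.2.2.2 c (hrect c hc) (hrect _ hc2)

include hcard hsub hsum ht hT hA in
lemma isSYT_splitB :
    IsSYT (shapeCells (partOf n (Finset.Icc 1 (m + n) \ s))) (splitB m n t T) := by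
  set Mu := shapeCells (partOf n (Finset.Icc 1 (m + n) \ s)) with hMu
  have hmem : ∀ c : ℕ × ℕ, c ∈ Mu ↔ c.1 < n ∧ c.2 < m ∧ t < T (m - 1 - c.2, n - 1 - c.1) :=
    fun c => mem_Mu_T hcard hsub hT hA
  have hrefl : ∀ c ∈ Mu, (m - 1 - c.2, n - 1 - c.1) ∈ shapeCells (List.replicate m n) := by
    intro c hc
    have := (hmem c).1 hc
    rw [mem_rect]
    exact ⟨by omega, by omega⟩
  have hval : ∀ c ∈ Mu, splitB m n t T c = m * n + 1 - T (m - 1 - c.2, n - 1 - c.1) := by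
    intro c hc
    rw [splitB, if_pos ((hmem c).1 hc)]
  have hTb : ∀ c ∈ Mu, t < T (m - 1 - c.2, n - 1 - c.1) ∧
      T (m - 1 - c.2, n - 1 - c.1) ≤ m * n := by
    intro c hc
    refine ⟨((hmem c).1 hc).2.2, ?_⟩
    have := (SYT_val hT (hrefl c hc)).2
    rwa [card_rect] at this
  have hcM := card_Mu hcard hsub hsum
  rw [← hMu] at hcM
  refine ⟨⟨?_, ?_, ?_⟩, ?_, ?_, ?_⟩
  · intro c hc
    rw [Finset.mem_coe] at hc
    have h1 := hTb c hc
    rw [hval c hc, Set.mem_Icc, hcM]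
    omega
  · intro c hc c' hc' h
    rw [Finset.mem_coe] at hc hc'
    have h1 := hTb c hc
    have h2 := hTb c' hc'
    rw [hval c hc, hval c' hc'] at h
    have h3 : T (m - 1 - c.2, n - 1 - c.1) = T (m - 1 - c'.2, n - 1 - c'.1) := by omega
    have h4 := SYT_inj hT (hrefl c hc) (hrefl c' hc') h3
    rw [Prod.mk.injEq] at h4
    have h5 := (hmem c).1 hc
    have h6 := (hmem c').1 hc'
    have : c.1 = c'.1 ∧ c.2 = c'.2 := by omega
    exact Prod.ext this.1 this.2
  · intro v hv
    rw [Set.mem_Icc, hcM] at hv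
    obtain ⟨c, hc, hceq⟩ := SYT_surj hT (v := m * n + 1 - v) (by omega) (by rw [card_rect]; omega)
    rw [mem_rect] at hc
    obtain ⟨i, j⟩ := c
    simp only at hc hceq
    have hd : (n - 1 - j, m - 1 - i) ∈ Mu := by
      rw [hmem]
      have e1 : m - 1 - (m - 1 - i) = i := by omega
      have e2 : n - 1 - (n - 1 - j) = j := by omega
      simp only
      rw [e1, e2, hceq]
      exact ⟨by omega, by omega, by omega⟩
    refine ⟨(n - 1 - j, m - 1 - i), Finset.mem_coe.2 hd, ?_⟩
    rw [hval _ hd]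
    simp only
    have e1 : m - 1 - (m - 1 - i) = i := by omega
    have e2 : n - 1 - (n - 1 - j) = j := by omega
    rw [e1, e2, hceq]
    omega
  · intro c hc
    rw [splitB, if_neg]
    intro hcon
    exact hc ((hmem c).2 hcon)
  · rintro ⟨p, q⟩ hc hc2
    have hp : p < n := ((hmem _).1 hc).1
    have hq1 : q + 1 < m := ((hmem _).1 hc2).2.1
    have h1 : t < T (m - 1 - q, n - 1 - p) ∧ T (m - 1 - q, n - 1 - p) ≤ m * n := hTb _ hc
    have h2 : t < T (m - 1 - (q + 1), n - 1 - p) ∧ T (m - 1 - (q + 1), n - 1 - p) ≤ m * n :=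
      hTb _ hc2
    have hv1 : splitB m n t T (p, q) = m * n + 1 - T (m - 1 - q, n - 1 - p) := hval _ hc
    have hv2 : splitB m n t T (p, q + 1) = m * n + 1 - T (m - 1 - (q + 1), n - 1 - p) :=
      hval _ hc2
    show splitB m n t T (p, q) < splitB m n t T (p, q + 1)
    rw [hv1, hv2]
    have hstep : T (m - 1 - (q + 1), n - 1 - p) < T (m - 1 - (q + 1) + 1, n - 1 - p) :=
      hT.2.2.2 (m - 1 - (q + 1), n - 1 - p)
        (mem_rect' (by omega) (by omega)) (mem_rect' (by omega) (by omega))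
    have e : m - 1 - (q + 1) + 1 = m - 1 - q := by omega
    rw [e] at hstep
    omega
  · rintro ⟨p, q⟩ hc hc2
    have hq : q < m := ((hmem _).1 hc).2.1
    have hp1 : p + 1 < n := ((hmem _).1 hc2).1
    have h1 : t < T (m - 1 - q, n - 1 - p) ∧ T (m - 1 - q, n - 1 - p) ≤ m * n := hTb _ hc
    have h2 : t < T (m - 1 - q, n - 1 - (p + 1)) ∧ T (m - 1 - q, n - 1 - (p + 1)) ≤ m * n :=
      hTb _ hc2
    have hv1 : splitB m n t T (p, q) = m * n + 1 - T (m - 1 - q, n - 1 - p) := hval _ hc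
    have hv2 : splitB m n t T (p + 1, q) = m * n + 1 - T (m - 1 - q, n - 1 - (p + 1)) :=
      hval _ hc2
    show splitB m n t T (p, q) < splitB m n t T (p + 1, q)
    rw [hv1, hv2]
    have hstep : T (m - 1 - q, n - 1 - (p + 1)) < T (m - 1 - q, n - 1 - (p + 1) + 1) :=
      hT.2.2.1 (m - 1 - q, n - 1 - (p + 1))
        (mem_rect' (by omega) (by omega)) (mem_rect' (by omega) (by omega))
    have e : n - 1 - (p + 1) + 1 = n - 1 - p := by omega
    rw [e] at hstep
    omega

end Split
section Glue

variable {m n t : ℕ} {s : Finset ℕ} {T T₁ T₂ : ℕ × ℕ → ℕ}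
variable (hcard : s.card = m) (hsub : s ⊆ Finset.Icc 1 (m + n))
variable (hsum : s.sum id = t + (m + 1).choose 2) (ht : t ≤ m * n)
variable (h1 : IsSYT (shapeCells (partOf m s)) T₁)
variable (h2 : IsSYT (shapeCells (partOf n (Finset.Icc 1 (m + n) \ s))) T₂)

include hcard hsub hsum h1 in
lemma glue_val_lam {i j : ℕ} (hi : i < m) (hj : j < Arow m s i) :
    glueT m n t s T₁ T₂ (i, j) = T₁ (i, j) ∧ 1 ≤ T₁ (i, j) ∧ T₁ (i, j) ≤ t := by
  have hjn : j < n := lt_of_lt_of_le hj (Arow_le hcard hsub hi)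
  have hmem : (i, j) ∈ shapeCells (partOf m s) := mem_Lam_pair.2 ⟨hi, hj⟩
  have hb := SYT_val h1 hmem
  rw [card_Lam hcard hsub hsum] at hb
  have hdef : glueT m n t s T₁ T₂ (i, j) =
      if i < m ∧ j < n then
        (if j < Arow m s i then T₁ (i, j) else m * n + 1 - T₂ (n - 1 - j, m - 1 - i))
      else 0 := rfl
  rw [hdef, if_pos ⟨hi, hjn⟩, if_pos hj]
  exact ⟨rfl, hb.1, hb.2⟩

include hcard hsub hsum ht h2 in
lemma glue_val_mu {i j : ℕ} (hi : i < m) (hjn : j < n) (hj : Arow m s i ≤ j) :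
    glueT m n t s T₁ T₂ (i, j) = m * n + 1 - T₂ (n - 1 - j, m - 1 - i) ∧
      t + 1 ≤ glueT m n t s T₁ T₂ (i, j) ∧ glueT m n t s T₁ T₂ (i, j) ≤ m * n := by
  have hmem : (n - 1 - j, m - 1 - i) ∈ shapeCells (partOf n (Finset.Icc 1 (m + n) \ s)) :=
    (reflect_mem_Mu hcard hsub hi hjn).2 hj
  have hb := SYT_val h2 hmem
  rw [card_Mu hcard hsub hsum] at hb
  have hdef : glueT m n t s T₁ T₂ (i, j) =
      if i < m ∧ j < n then
        (if j < Arow m s i then T₁ (i, j) else m * n + 1 - T₂ (n - 1 - j, m - 1 - i))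
      else 0 := rfl
  rw [hdef, if_pos ⟨hi, hjn⟩, if_neg (by omega)]
  exact ⟨rfl, by omega, by omega⟩

include hcard hsub hsum ht h1 h2 in
lemma isSYT_glue : IsSYT (shapeCells (List.replicate m n)) (glueT m n t s T₁ T₂) := by
  refine ⟨⟨?_, ?_, ?_⟩, ?_, ?_, ?_⟩
  · rintro ⟨i, j⟩ hc
    rw [Finset.mem_coe, mem_rect_pair] at hc
    obtain ⟨hi, hj⟩ := hc
    rw [Set.mem_Icc, card_rect]
    by_cases hlt : j < Arow m s i
    · obtain ⟨hv, hb1, hb2⟩ := glue_val_lam (T₂ := T₂) hcard hsub hsum h1 hi hlt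
      rw [hv]; omega
    · obtain ⟨hv, hb1, hb2⟩ := glue_val_mu (T₁ := T₁) hcard hsub hsum ht h2 hi hj (by omega)
      omega
  · rintro ⟨i, j⟩ hc ⟨i', j'⟩ hc' heq
    rw [Finset.mem_coe, mem_rect_pair] at hc hc'
    obtain ⟨hi, hj⟩ := hc
    obtain ⟨hi', hj'⟩ := hc'
    by_cases hlt : j < Arow m s i <;> by_cases hlt' : j' < Arow m s i'
    · obtain ⟨hv, hb1, hb2⟩ := glue_val_lam (T₂ := T₂) hcard hsub hsum h1 hi hlt
      obtain ⟨hv', hb1', hb2'⟩ := glue_val_lam (T₂ := T₂) hcard hsub hsum h1 hi' hlt'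
      rw [hv, hv'] at heq
      exact SYT_inj h1 (mem_Lam_pair.2 ⟨hi, hlt⟩) (mem_Lam_pair.2 ⟨hi', hlt'⟩) heq
    · obtain ⟨hv, hb1, hb2⟩ := glue_val_lam (T₂ := T₂) hcard hsub hsum h1 hi hlt
      obtain ⟨hv', hb1', hb2'⟩ := glue_val_mu (T₁ := T₁) hcard hsub hsum ht h2 hi' hj' (by omega)
      omega
    · obtain ⟨hv, hb1, hb2⟩ := glue_val_mu (T₁ := T₁) hcard hsub hsum ht h2 hi hj (by omega)
      obtain ⟨hv', hb1', hb2'⟩ := glue_val_lam (T₂ := T₂) hcard hsub hsum h1 hi' hlt'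
      omega
    · obtain ⟨hv, hb1, hb2⟩ := glue_val_mu (T₁ := T₁) hcard hsub hsum ht h2 hi hj (by omega)
      obtain ⟨hv', hb1', hb2'⟩ := glue_val_mu (T₁ := T₁) hcard hsub hsum ht h2 hi' hj' (by omega)
      have hmem : (n - 1 - j, m - 1 - i) ∈ shapeCells (partOf n (Finset.Icc 1 (m + n) \ s)) :=
        (reflect_mem_Mu hcard hsub hi hj).2 (by omega)
      have hmem' : (n - 1 - j', m - 1 - i') ∈ shapeCells (partOf n (Finset.Icc 1 (m + n) \ s)) :=
        (reflect_mem_Mu hcard hsub hi' hj').2 (by omega)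
      have hbv := SYT_val h2 hmem
      have hbv' := SYT_val h2 hmem'
      rw [card_Mu hcard hsub hsum] at hbv hbv'
      have hT2 : T₂ (n - 1 - j, m - 1 - i) = T₂ (n - 1 - j', m - 1 - i') := by
        rw [hv, hv'] at heq; omega
      have := SYT_inj h2 hmem hmem' hT2
      rw [Prod.mk.injEq] at this
      rw [Prod.mk.injEq]
      omega
  · intro v hv
    rw [Set.mem_Icc, card_rect] at hv
    by_cases hvt : v ≤ t
    · have hcL := card_Lam hcard hsub hsum
      obtain ⟨c, hc, hceq⟩ := SYT_surj h1 hv.1 (by omega)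
      obtain ⟨i, j⟩ := c
      rw [mem_Lam_pair] at hc
      obtain ⟨hv', hb1, hb2⟩ := glue_val_lam (T₂ := T₂) hcard hsub hsum h1 hc.1 hc.2
      refine ⟨(i, j), ?_, by rw [hv']; exact hceq⟩
      rw [Finset.mem_coe, mem_rect_pair]
      exact ⟨hc.1, lt_of_lt_of_le hc.2 (Arow_le hcard hsub hc.1)⟩
    · have hcM := card_Mu hcard hsub hsum
      obtain ⟨c, hc, hceq⟩ := SYT_surj h2 (v := m * n + 1 - v) (by omega) (by omega)
      obtain ⟨p, q⟩ := c
      have hcm := (mem_Mu_pair hcard hsub).1 hc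
      have hq : q < m := by
        have := cP_le_m (m := m) (n := n) (s := s) p
        rw [Brow_eq] at hcm
        omega
      have hi : m - 1 - q < m := by omega
      have hj : n - 1 - p < n := by omega
      have harow : Arow m s (m - 1 - q) ≤ n - 1 - p := by
        have := (reflect_mem_Mu hcard hsub hi hj (s := s))
        have e1 : n - 1 - (n - 1 - p) = p := by omega
        have e2 : m - 1 - (m - 1 - q) = q := by omega
        rw [e1, e2] at this
        exact this.1 hc
      obtain ⟨hv', hb1, hb2⟩ := glue_val_mu (T₁ := T₁) hcard hsub hsum ht h2 hi hj harow
      refine ⟨(m - 1 - q, n - 1 - p), ?_, ?_⟩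
      · rw [Finset.mem_coe]; exact mem_rect' hi hj
      · have e1 : n - 1 - (n - 1 - p) = p := by omega
        have e2 : m - 1 - (m - 1 - q) = q := by omega
        rw [hv', e1, e2, hceq]
        have hb := SYT_val h2 hc
        rw [card_Mu hcard hsub hsum] at hb
        omega
  · rintro ⟨i, j⟩ hc
    rw [mem_rect_pair] at hc
    have hdef : glueT m n t s T₁ T₂ (i, j) =
        if i < m ∧ j < n then
          (if j < Arow m s i then T₁ (i, j) else m * n + 1 - T₂ (n - 1 - j, m - 1 - i))
        else 0 := rfl
    rw [hdef, if_neg hc]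
  · rintro ⟨i, j⟩ hc hc2
    rw [mem_rect_pair] at hc hc2
    obtain ⟨hi, hj⟩ := hc
    have hj1 : j + 1 < n := hc2.2
    by_cases hlt1 : j + 1 < Arow m s i
    · obtain ⟨hv, hb1, hb2⟩ := glue_val_lam (T₂ := T₂) hcard hsub hsum h1 hi (show j < Arow m s i by omega)
      obtain ⟨hv', hb1', hb2'⟩ := glue_val_lam (T₂ := T₂) hcard hsub hsum h1 hi hlt1
      show glueT m n t s T₁ T₂ (i, j) < glueT m n t s T₁ T₂ (i, j + 1)
      rw [hv, hv']
      exact h1.2.2.1 (i, j) (mem_Lam_pair.2 ⟨hi, by omega⟩) (mem_Lam_pair.2 ⟨hi, hlt1⟩)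
    · by_cases hlt : j < Arow m s i
      · obtain ⟨hv, hb1, hb2⟩ := glue_val_lam (T₂ := T₂) hcard hsub hsum h1 hi hlt
        obtain ⟨hv', hb1', hb2'⟩ := glue_val_mu (T₁ := T₁) hcard hsub hsum ht h2 hi hj1 (by omega)
        show glueT m n t s T₁ T₂ (i, j) < glueT m n t s T₁ T₂ (i, j + 1)
        omega
      · obtain ⟨hv, hb1, hb2⟩ := glue_val_mu (T₁ := T₁) hcard hsub hsum ht h2 hi hj (by omega)
        obtain ⟨hv', hb1', hb2'⟩ := glue_val_mu (T₁ := T₁) hcard hsub hsum ht h2 hi hj1 (by omega)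
        show glueT m n t s T₁ T₂ (i, j) < glueT m n t s T₁ T₂ (i, j + 1)
        rw [hv, hv']
        have hmem : (n - 1 - (j + 1), m - 1 - i) ∈
            shapeCells (partOf n (Finset.Icc 1 (m + n) \ s)) :=
          (reflect_mem_Mu hcard hsub hi hj1).2 (by omega)
        have hmem' : (n - 1 - j, m - 1 - i) ∈
            shapeCells (partOf n (Finset.Icc 1 (m + n) \ s)) :=
          (reflect_mem_Mu hcard hsub hi hj).2 (by omega)
        have hstep : T₂ (n - 1 - (j + 1), m - 1 - i) < T₂ (n - 1 - (j + 1) + 1, m - 1 - i) := by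
          refine h2.2.2.2 (n - 1 - (j + 1), m - 1 - i) hmem ?_
          have e : n - 1 - (j + 1) + 1 = n - 1 - j := by omega
          show (n - 1 - (j + 1) + 1, m - 1 - i) ∈ _
          rw [e]
          exact hmem'
        have e : n - 1 - (j + 1) + 1 = n - 1 - j := by omega
        rw [e] at hstep
        have hbv' := SYT_val h2 hmem'
        rw [card_Mu hcard hsub hsum] at hbv'
        omega
  · rintro ⟨i, j⟩ hc hc2
    rw [mem_rect_pair] at hc hc2
    obtain ⟨hi, hj⟩ := hc
    have hi1 : i + 1 < m := hc2.1
    have hanti : Arow m s (i + 1) ≤ Arow m s i := Arow_anti hcard hsub (by omega) hi1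
    by_cases hlt1 : j < Arow m s (i + 1)
    · obtain ⟨hv, hb1, hb2⟩ := glue_val_lam (T₂ := T₂) hcard hsub hsum h1 hi (show j < Arow m s i by omega)
      obtain ⟨hv', hb1', hb2'⟩ := glue_val_lam (T₂ := T₂) hcard hsub hsum h1 hi1 hlt1
      show glueT m n t s T₁ T₂ (i, j) < glueT m n t s T₁ T₂ (i + 1, j)
      rw [hv, hv']
      exact h1.2.2.2 (i, j) (mem_Lam_pair.2 ⟨hi, by omega⟩) (mem_Lam_pair.2 ⟨hi1, hlt1⟩)
    · by_cases hlt : j < Arow m s i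
      · obtain ⟨hv, hb1, hb2⟩ := glue_val_lam (T₂ := T₂) hcard hsub hsum h1 hi hlt
        obtain ⟨hv', hb1', hb2'⟩ := glue_val_mu (T₁ := T₁) hcard hsub hsum ht h2 hi1 hj (by omega)
        show glueT m n t s T₁ T₂ (i, j) < glueT m n t s T₁ T₂ (i + 1, j)
        omega
      · obtain ⟨hv, hb1, hb2⟩ := glue_val_mu (T₁ := T₁) hcard hsub hsum ht h2 hi hj (by omega)
        obtain ⟨hv', hb1', hb2'⟩ := glue_val_mu (T₁ := T₁) hcard hsub hsum ht h2 hi1 hj (by omega)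
        show glueT m n t s T₁ T₂ (i, j) < glueT m n t s T₁ T₂ (i + 1, j)
        rw [hv, hv']
        have hmem : (n - 1 - j, m - 1 - (i + 1)) ∈
            shapeCells (partOf n (Finset.Icc 1 (m + n) \ s)) :=
          (reflect_mem_Mu hcard hsub hi1 hj).2 (by omega)
        have hmem' : (n - 1 - j, m - 1 - i) ∈
            shapeCells (partOf n (Finset.Icc 1 (m + n) \ s)) :=
          (reflect_mem_Mu hcard hsub hi hj).2 (by omega)
        have hstep : T₂ (n - 1 - j, m - 1 - (i + 1)) < T₂ (n - 1 - j, m - 1 - (i + 1) + 1) := by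
          refine h2.2.2.1 (n - 1 - j, m - 1 - (i + 1)) hmem ?_
          have e : m - 1 - (i + 1) + 1 = m - 1 - i := by omega
          show (n - 1 - j, m - 1 - (i + 1) + 1) ∈ _
          rw [e]
          exact hmem'
        have e : m - 1 - (i + 1) + 1 = m - 1 - i := by omega
        rw [e] at hstep
        have hbv' := SYT_val h2 hmem'
        rw [card_Mu hcard hsub hsum] at hbv'
        omega

include hcard hsub hsum ht h1 h2 in
lemma aT_glue {i : ℕ} (hi : i < m) : aT n t (glueT m n t s T₁ T₂) i = Arow m s i := by
  rw [aT]
  have hfil : (Finset.range n).filter (fun j => glueT m n t s T₁ T₂ (i, j) ≤ t)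
      = Finset.range (Arow m s i) := by
    ext j
    rw [Finset.mem_filter, Finset.mem_range, Finset.mem_range]
    constructor
    · rintro ⟨hjn, hle⟩
      by_contra hcon
      obtain ⟨_, hb1, _⟩ := glue_val_mu (T₁ := T₁) hcard hsub hsum ht h2 hi hjn (by omega)
      omega
    · intro hj
      have hjn : j < n := lt_of_lt_of_le hj (Arow_le hcard hsub hi)
      obtain ⟨hv, hb1, hb2⟩ := glue_val_lam (T₂ := T₂) hcard hsub hsum h1 hi hj
      exact ⟨hjn, by omega⟩
  rw [hfil, Finset.card_range]

end Glue
section Phi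

variable {m n t : ℕ} {s : Finset ℕ} {T T₁ T₂ : ℕ × ℕ → ℕ}
variable (hcard : s.card = m) (hsub : s ⊆ Finset.Icc 1 (m + n))
variable (hsum : s.sum id = t + (m + 1).choose 2) (ht : t ≤ m * n)
variable (hT : IsSYT (shapeCells (List.replicate m n)) T)

include hT in
lemma aT_staircase_strict : ∀ i j, i < j → j < m →
    aT n t T j + (m - j) < aT n t T i + (m - i) := by
  intro i j hij hj
  have := aT_anti hT (t := t) (le_of_lt hij) hj
  omega

include hT in
lemma A_of_phi (hphi : phiT m n t T = s) : ∀ i < m, aT n t T i = Arow m s i := by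
  have hsort : sortDesc s = (List.range m).map (fun i => aT n t T i + (m - i)) := by
    rw [← hphi, phiT]
    exact sortDesc_image (aT_staircase_strict hT)
  intro i hi
  rw [Arow, hsort, getD_map_range _ hi]
  omega

include hcard hsub in
lemma phi_of_A (hA : ∀ i < m, aT n t T i = Arow m s i) : phiT m n t T = s := by
  rw [phiT, s_eq_image hcard hsub]
  apply Finset.image_congr
  intro i hi
  rw [Finset.coe_range, Set.mem_Iio] at hi
  simp only
  rw [hA i hi]

include hT in
lemma phi_mem (ht : t ≤ m * n) :
    phiT m n t T ∈ (Finset.powersetCard m (Finset.Icc 1 (m + n))).filter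
      (fun s => s.sum id = t + (m + 1).choose 2) := by
  have hinj : ∀ x ∈ Finset.range m, ∀ y ∈ Finset.range m,
      aT n t T x + (m - x) = aT n t T y + (m - y) → x = y := by
    intro x hx y hy hxy
    rw [Finset.mem_range] at hx hy
    by_contra hne
    rcases Nat.lt_or_ge x y with h | h
    · have := aT_staircase_strict (t := t) hT x y h hy; omega
    · have := aT_staircase_strict (t := t) hT y x (by omega) hx; omega
  rw [Finset.mem_filter, Finset.mem_powersetCard]
  refine ⟨⟨?_, ?_⟩, ?_⟩
  · intro x hx
    rw [phiT, Finset.mem_image] at hx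
    obtain ⟨i, hi, rfl⟩ := hx
    rw [Finset.mem_range] at hi
    have := aT_le n t T i
    rw [Finset.mem_Icc]
    omega
  · rw [phiT, Finset.card_image_of_injOn (fun x hx y hy => hinj x hx y hy), Finset.card_range]
  · rw [phiT, Finset.sum_image hinj]
    simp only [id]
    rw [Finset.sum_add_distrib, gauss_sum, aT_sum hT ht]

include hcard hsub hT in
lemma glue_split (hA : ∀ i < m, aT n t T i = Arow m s i) :
    glueT m n t s (splitA t T) (splitB m n t T) = T := by
  funext c
  obtain ⟨i, j⟩ := c
  have hdef : glueT m n t s (splitA t T) (splitB m n t T) (i, j) =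
      if i < m ∧ j < n then
        (if j < Arow m s i then splitA t T (i, j)
         else m * n + 1 - splitB m n t T (n - 1 - j, m - 1 - i))
      else 0 := rfl
  rw [hdef]
  by_cases hij : i < m ∧ j < n
  · rw [if_pos hij]
    by_cases hlt : j < Arow m s i
    · rw [if_pos hlt]
      have hmem : (i, j) ∈ shapeCells (partOf m s) := mem_Lam_pair.2 ⟨hij.1, hlt⟩
      have hle : T (i, j) ≤ t := ((mem_Lam_T hcard hsub hT hA).1 hmem).2.2
      rw [splitA, if_pos hle]
    · rw [if_neg hlt]
      have e1 : m - 1 - (m - 1 - i) = i := by omega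
      have e2 : n - 1 - (n - 1 - j) = j := by omega
      have hTgt : t < T (i, j) := by
        by_contra hcon
        push_neg at hcon
        have hmem := (mem_Lam_T hcard hsub hT hA (c := (i, j))).2 ⟨hij.1, hij.2, hcon⟩
        rw [mem_Lam_pair] at hmem
        exact hlt hmem.2
      have hsdef : splitB m n t T (n - 1 - j, m - 1 - i) =
          if n - 1 - j < n ∧ m - 1 - i < m ∧ t < T (m - 1 - (m - 1 - i), n - 1 - (n - 1 - j))
          then m * n + 1 - T (m - 1 - (m - 1 - i), n - 1 - (n - 1 - j)) else 0 := rfl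
      rw [hsdef, e1, e2, if_pos ⟨by omega, by omega, hTgt⟩]
      have hb := SYT_val hT (mem_rect' hij.1 hij.2)
      rw [card_rect] at hb
      omega
  · rw [if_neg hij]
    symm
    exact hT.2.1 (i, j) (fun hmem => hij (mem_rect_pair.1 hmem))

variable (h1 : IsSYT (shapeCells (partOf m s)) T₁)
variable (h2 : IsSYT (shapeCells (partOf n (Finset.Icc 1 (m + n) \ s))) T₂)

include hcard hsub hsum ht h1 h2 in
lemma splitA_glue : splitA t (glueT m n t s T₁ T₂) = T₁ := by
  funext c
  obtain ⟨i, j⟩ := c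
  have hdefA : splitA t (glueT m n t s T₁ T₂) (i, j) =
      if glueT m n t s T₁ T₂ (i, j) ≤ t then glueT m n t s T₁ T₂ (i, j) else 0 := rfl
  rw [hdefA]
  by_cases hij : i < m ∧ j < n
  · by_cases hlt : j < Arow m s i
    · obtain ⟨hv, hb1, hb2⟩ := glue_val_lam (T₂ := T₂) hcard hsub hsum h1 hij.1 hlt
      rw [hv, if_pos hb2]
    · obtain ⟨hv, hb1, hb2⟩ := glue_val_mu (T₁ := T₁) hcard hsub hsum ht h2 hij.1 hij.2
        (by omega)
      rw [if_neg (by omega)]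
      symm
      exact h1.2.1 (i, j) (fun hmem => hlt (mem_Lam_pair.1 hmem).2)
  · have hg0 : glueT m n t s T₁ T₂ (i, j) = 0 := by
      have hdef : glueT m n t s T₁ T₂ (i, j) =
          if i < m ∧ j < n then
            (if j < Arow m s i then T₁ (i, j) else m * n + 1 - T₂ (n - 1 - j, m - 1 - i))
          else 0 := rfl
      rw [hdef, if_neg hij]
    rw [hg0, if_pos (by omega)]
    symm
    refine h1.2.1 (i, j) (fun hmem => ?_)
    rw [mem_Lam_pair] at hmem
    exact hij ⟨hmem.1, lt_of_lt_of_le hmem.2 (Arow_le hcard hsub hmem.1)⟩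

include hcard hsub hsum ht h1 h2 in
lemma splitB_glue : splitB m n t (glueT m n t s T₁ T₂) = T₂ := by
  funext c
  obtain ⟨p, q⟩ := c
  have hdefB : splitB m n t (glueT m n t s T₁ T₂) (p, q) =
      if p < n ∧ q < m ∧ t < glueT m n t s T₁ T₂ (m - 1 - q, n - 1 - p)
      then m * n + 1 - glueT m n t s T₁ T₂ (m - 1 - q, n - 1 - p) else 0 := rfl
  rw [hdefB]
  by_cases hmem : (p, q) ∈ shapeCells (partOf n (Finset.Icc 1 (m + n) \ s))
  · have hpq := (mem_Mu_pair hcard hsub).1 hmem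
    have hp : p < n := hpq.1
    have hq : q < m := by
      have := cP_le_m (m := m) (n := n) (s := s) p
      rw [Brow_eq] at hpq
      omega
    have hi : m - 1 - q < m := by omega
    have hj : n - 1 - p < n := by omega
    have e1 : n - 1 - (n - 1 - p) = p := by omega
    have e2 : m - 1 - (m - 1 - q) = q := by omega
    have harow : Arow m s (m - 1 - q) ≤ n - 1 - p := by
      have hrm := reflect_mem_Mu hcard hsub (s := s) hi hj
      rw [e1, e2] at hrm
      exact hrm.1 hmem
    obtain ⟨hv, hb1, hb2⟩ := glue_val_mu (T₁ := T₁) hcard hsub hsum ht h2 hi hj harow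
    rw [e1, e2] at hv
    rw [if_pos ⟨hp, hq, by omega⟩, hv]
    have hbv := SYT_val h2 hmem
    omega
  · have hz : T₂ (p, q) = 0 := h2.2.1 _ hmem
    rw [hz, if_neg]
    rintro ⟨hp, hq, hgt⟩
    have hi : m - 1 - q < m := by omega
    have hj : n - 1 - p < n := by omega
    have e1 : n - 1 - (n - 1 - p) = p := by omega
    have e2 : m - 1 - (m - 1 - q) = q := by omega
    by_cases hlt : n - 1 - p < Arow m s (m - 1 - q)
    · obtain ⟨hv, hb1, hb2⟩ := glue_val_lam (T₂ := T₂) hcard hsub hsum h1 hi hlt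
      omega
    · have hrm := reflect_mem_Mu hcard hsub (s := s) hi hj
      rw [e1, e2] at hrm
      exact hmem (hrm.2 (by omega))

end Phi

/-- `∑_{λ ⊆ (n^m), |λ| = t} f^λ f^{λᶜ} = f^{(n^m)}`, where partitions
`λ` in the `m×n` box are encoded by the set of parts of the strict partition
`λ + (m,…,1)`, an `m`-subset of `{1,…,m+n}`, and `λᶜ + (n,…,1)` is its complement. -/
theorem rectangle_complement_sum (m n t : ℕ) (ht : t ≤ m * n) :
    ∑ s ∈ (Finset.powersetCard m (Finset.Icc 1 (m + n))).filter
        (fun s => s.sum id = t + (m + 1).choose 2),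
      fL (partOf m s) * fL (partOf n (Finset.Icc 1 (m + n) \ s))
    = fL (List.replicate m n) := by
  classical
  letI : Fintype {T : ℕ × ℕ → ℕ // IsSYT (shapeCells (List.replicate m n)) T} :=
    Fintype.ofFinite _
  have key : ∀ s ∈ (Finset.powersetCard m (Finset.Icc 1 (m + n))).filter
        (fun s => s.sum id = t + (m + 1).choose 2),
      fL (partOf m s) * fL (partOf n (Finset.Icc 1 (m + n) \ s))
        = (Finset.univ.filter
            (fun T : {T // IsSYT (shapeCells (List.replicate m n)) T} =>
              phiT m n t T.1 = s)).card := by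
    intro s hs
    rw [Finset.mem_filter, Finset.mem_powersetCard] at hs
    obtain ⟨⟨hsub, hcard⟩, hsum⟩ := hs
    have e : {T : {T // IsSYT (shapeCells (List.replicate m n)) T} // phiT m n t T.1 = s}
        ≃ {T₁ // IsSYT (shapeCells (partOf m s)) T₁} ×
          {T₂ // IsSYT (shapeCells (partOf n (Finset.Icc 1 (m + n) \ s))) T₂} :=
      { toFun := fun x =>
          (⟨splitA t x.1.1, isSYT_splitA hcard hsub hsum ht x.1.2 (A_of_phi x.1.2 x.2)⟩,
           ⟨splitB m n t x.1.1, isSYT_splitB hcard hsub hsum ht x.1.2 (A_of_phi x.1.2 x.2)⟩)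
        invFun := fun y =>
          ⟨⟨glueT m n t s y.1.1 y.2.1, isSYT_glue hcard hsub hsum ht y.1.2 y.2.2⟩,
            phi_of_A hcard hsub (fun i hi => aT_glue hcard hsub hsum ht y.1.2 y.2.2 hi)⟩
        left_inv := fun x => by
          apply Subtype.ext
          apply Subtype.ext
          exact glue_split hcard hsub x.1.2 (A_of_phi x.1.2 x.2)
        right_inv := fun y => by
          apply Prod.ext
          · apply Subtype.ext
            exact splitA_glue hcard hsub hsum ht y.1.2 y.2.2
          · apply Subtype.ext
            exact splitB_glue hcard hsub hsum ht y.1.2 y.2.2 }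
    have h1 : fL (partOf m s) * fL (partOf n (Finset.Icc 1 (m + n) \ s))
        = Nat.card ({T₁ // IsSYT (shapeCells (partOf m s)) T₁} ×
            {T₂ // IsSYT (shapeCells (partOf n (Finset.Icc 1 (m + n) \ s))) T₂}) :=
      (Nat.card_prod _ _).symm
    rw [h1, ← Nat.card_congr e, Nat.card_eq_fintype_card, Fintype.card_subtype]
  rw [Finset.sum_congr rfl key]
  have hfib := Finset.card_eq_sum_card_fiberwise
    (f := fun T : {T // IsSYT (shapeCells (List.replicate m n)) T} => phiT m n t T.1)
    (s := Finset.univ)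
    (t := (Finset.powersetCard m (Finset.Icc 1 (m + n))).filter
        (fun s => s.sum id = t + (m + 1).choose 2))
    (fun T _ => phi_mem T.2 ht)
  rw [← hfib, Finset.card_univ]
  simp only [fL, numSYT]
  rw [Nat.card_eq_fintype_card]
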